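/- Let c ∈ ℕ₀ ∩ T_l(M/K), let l₀ be the integer specified in the definition of T_l(M/K) for t = c, and let (j,k) be the unique element of Ω_{l₀} with λ^l_{M/K}(c) = φ̃^{j,m}_{L/K}(φ̃^k_{M/L}(c)). Suppose r_0,…,r_ν ∈ R, s_0,…,s_μ ∈ R, δ_F ∈ (π_L,ε)·I_F and δ_G ∈ (π_M,ε)·I'_G satisfy F̂(π_L(1+ε)) = π_K·(1 + Σ_{j'=0}^{ν} r_{j'} π_L^{i_{j'}} ε^{p^{j'}} + δ_F) and Ĝ(π_M(1+π_M^c ε)) = π_L·(1 + Σ_{k'=0}^{μ} s_{k'} π_M^{φ̃^{k'}_{M/L}(c)} ε^{p^{k'}} + δ_G). Then r_j ≠ 0 and s_k ≠ 0. -/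

import Mathlib

noncomputable section

/-- The additive valuation (with respect to powers of the prime element `π`) of an
element `x` of a discrete valuation ring: the largest `k` with `x ∈ (π^k)`
(`⊤` if `x = 0`). -/
def piVal {A : Type*} [CommRing A] (π : A) (x : A) : ℕ∞ :=
  ⨆ k ∈ {k : ℕ | x ∈ Ideal.span {π ^ k}}, (k : ℕ∞)

/-- `ĩ_j = min {h ≥ 0 : v_p(h+n) ≤ j, a_h ≠ 0}` (`⊤` if no such `h` exists). -/
def itilde (p n : ℕ) {OK : Type*} [CommRing OK] (aF : ℕ → OK) (j : ℕ) : ℕ∞ :=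
  ⨅ h ∈ {h : ℕ | padicValNat p (h + n) ≤ j ∧ aF h ≠ 0}, (h : ℕ∞)

/-- The `j`-th index of inseparability (closed form):
`i_j = min {ĩ_{j₁} + (j₁−j)·v(p) : j ≤ j₁ ≤ ν}`. -/
def insepIdx (p n ν : ℕ) {OK : Type*} [CommRing OK] (aF : ℕ → OK) (vLp : ℕ∞) (j : ℕ) : ℕ∞ :=
  ⨅ j1 ∈ Set.Icc j ν, (itilde p n aF j1 + ((j1 - j : ℕ) : ℕ∞) * vLp)

/-- The generalized Hasse–Herbrand function
`φ^l(x) = min {i_{l₀} + p^{l₀} x : 0 ≤ l₀ ≤ l}` attached to indices `iL`. -/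
def hhPhi (p : ℕ) (iL : ℕ → ℕ) (l : ℕ) (x : ℝ) : ℝ :=
  sInf {y : ℝ | ∃ l0 ≤ l, y = iL l0 + (p : ℝ) ^ l0 * x}

/-- `λ^l_{M/K}(x) = min {φ̃^{j,m}_{L/K}(φ̃^k_{M/L}(x)) : (j,k) ∈ Ω_{l₀}, l₀ ≤ l}`, where
`φ̃^{j,m}_{L/K}(y) = m·i_j + p^j y` and `φ̃^k_{M/L}(x) = i'_k + p^k x`. -/
def lamMK (p m : ℕ) (iL iM : ℕ → ℕ) (ν μ l : ℕ) (x : ℝ) : ℝ :=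
  sInf {y : ℝ | ∃ j k : ℕ, j ≤ ν ∧ k ≤ μ ∧ j + k ≤ l ∧
    y = (m : ℝ) * iL j + (p : ℝ) ^ j * ((iM k : ℝ) + (p : ℝ) ^ k * x)}

/-- `S_l^a(x) = {(j,k) ∈ Ω_a : φ̃^{j,m}_{L/K}(φ̃^k_{M/L}(x)) = λ^l_{M/K}(x)}`. -/
def sSetMK (p m : ℕ) (iL iM : ℕ → ℕ) (ν μ l a : ℕ) (x : ℝ) : Set (ℕ × ℕ) :=
  {jk : ℕ × ℕ | jk.1 ≤ ν ∧ jk.2 ≤ μ ∧ jk.1 + jk.2 = a ∧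
    (m : ℝ) * iL jk.1 + (p : ℝ) ^ jk.1 * ((iM jk.2 : ℝ) + (p : ℝ) ^ jk.2 * x)
      = lamMK p m iL iM ν μ l x}



section NatLemmas

variable {p : ℕ} [hp : Fact p.Prime]

lemma choose_val_eq (j A : ℕ) (hA : p ^ j ≤ A) :
    padicValNat p A + padicValNat p ((A - 1).choose (p ^ j - 1)) =
      j + padicValNat p (A.choose (p ^ j)) := by
  have hppos : 0 < p ^ j := pow_pos hp.out.pos j
  have hA0 : 0 < A := lt_of_lt_of_le hppos hA
  have key : A * (A - 1).choose (p ^ j - 1) = A.choose (p ^ j) * p ^ j := by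
    have h := Nat.add_one_mul_choose_eq (A - 1) (p ^ j - 1)
    have h1 : A - 1 + 1 = A := by omega
    have h2 : p ^ j - 1 + 1 = p ^ j := by omega
    rwa [h1, h2] at h
  have hc1 : (A - 1).choose (p ^ j - 1) ≠ 0 := (Nat.choose_pos (by omega)).ne'
  have hc2 : A.choose (p ^ j) ≠ 0 := (Nat.choose_pos hA).ne'
  have h3 := congrArg (padicValNat p) key
  rw [padicValNat.mul (by omega) hc1, padicValNat.mul hc2 (by positivity),
    padicValNat.prime_pow] at h3
  omega

lemma choose_val_lower (j A : ℕ) (hA : p ^ j ≤ A) :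
    padicValNat p A ≤ j + padicValNat p (A.choose (p ^ j)) := by
  have := choose_val_eq (p := p) j A hA
  omega

/-- Lucas-type step: if `p^j ∣ A` then `p ∤ choose (A-1) (p^j - 1)`. -/
lemma lucas_not_dvd (j : ℕ) : ∀ A : ℕ, 0 < A → p ^ j ∣ A → ¬ p ∣ (A - 1).choose (p ^ j - 1) := by
  induction j with
  | zero => intro A hA _; simpa using hp.out.one_lt.ne'
  | succ j ih =>
      intro A hA hdvd
      have hppos : 0 < p := hp.out.pos
      have hp1 : 1 < p := hp.out.one_lt
      have hpA : p ∣ A := dvd_trans (dvd_pow_self p (Nat.succ_ne_zero j)) hdvd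
      obtain ⟨B, rfl⟩ := hpA
      have hB0 : 0 < B := Nat.pos_of_ne_zero (by rintro rfl; simp at hA)
      have hpjB : p ^ j ∣ B := by
        have h := hdvd
        rw [pow_succ, mul_comm (p ^ j) p] at h
        exact (mul_dvd_mul_iff_left (by omega : p ≠ 0)).mp h
      obtain ⟨B', rfl⟩ : ∃ B', B = B' + 1 := ⟨B - 1, by omega⟩
      have hpj : 0 < p ^ j := pow_pos hppos j
      obtain ⟨Q, hQ⟩ : ∃ Q, p ^ j = Q + 1 := ⟨p ^ j - 1, by omega⟩
      have hd1 : p * (B' + 1) = p * B' + p := by ring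
      have e1 : p * (B' + 1) - 1 = p * B' + (p - 1) := by omega
      have e2 : p ^ (j + 1) - 1 = p * Q + (p - 1) := by
        have : p ^ (j + 1) = p * (Q + 1) := by rw [← hQ, pow_succ, mul_comm]
        have hd2 : p * (Q + 1) = p * Q + p := by ring
        omega
      have hmod1 : (p * (B' + 1) - 1) % p = p - 1 := by
        rw [e1, Nat.mul_add_mod, Nat.mod_eq_of_lt (by omega)]
      have hdiv1 : (p * (B' + 1) - 1) / p = B' := by
        rw [e1, Nat.mul_add_div hppos, Nat.div_eq_of_lt (by omega), add_zero]
      have hmod2 : (p ^ (j + 1) - 1) % p = p - 1 := by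
        rw [e2, Nat.mul_add_mod, Nat.mod_eq_of_lt (by omega)]
      have hdiv2 : (p ^ (j + 1) - 1) / p = Q := by
        rw [e2, Nat.mul_add_div hppos, Nat.div_eq_of_lt (by omega), add_zero]
      have lucas := Choose.choose_modEq_choose_mod_mul_choose_div_nat
        (p := p) (n := p * (B' + 1) - 1) (k := p ^ (j + 1) - 1)
      rw [hmod1, hdiv1, hmod2, hdiv2, Nat.choose_self, one_mul] at lucas
      intro hcon
      have hB'Q : B' = (B' + 1) - 1 := by omega
      have hQpj : Q = p ^ j - 1 := by omega
      have : p ∣ B'.choose Q :=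
        (Nat.modEq_zero_iff_dvd).mp (lucas.symm.trans (Nat.modEq_zero_iff_dvd.mpr hcon))
      rw [hB'Q, hQpj] at this
      exact ih (B' + 1) (by omega) hpjB this

lemma choose_val_exact (j A : ℕ) (hA : 0 < A) (hdvd : p ^ j ∣ A) :
    padicValNat p (A.choose (p ^ j)) + j = padicValNat p A := by
  have hle : p ^ j ≤ A := Nat.le_of_dvd hA hdvd
  have h1 := choose_val_eq (p := p) j A hle
  have h2 : padicValNat p ((A - 1).choose (p ^ j - 1)) = 0 :=
    padicValNat.eq_zero_of_not_dvd (lucas_not_dvd j A hA hdvd)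
  omega

end NatLemmas

section DVR

variable {O : Type*} [CommRing O] [IsDomain O] {π : O}

lemma not_dvd_unit_mul_pow (hπ : Irreducible π) {u : O} (hu : IsUnit u) (A : ℕ) :
    ¬ π ^ (A + 1) ∣ u * π ^ A := by
  rintro ⟨y, hy⟩
  have h : u * π ^ A = π ^ A * (π * y) := by rw [hy]; ring
  have h2 : π ^ A * u = π ^ A * (π * y) := by rw [← h]; ring
  have h3 : u = π * y := mul_left_cancel₀ (pow_ne_zero A hπ.ne_zero) h2
  exact hπ.not_isUnit (isUnit_of_mul_isUnit_left (h3 ▸ hu))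

lemma pow_dvd_pow_iff_le' (hπ : Irreducible π) {a b : ℕ} : π ^ a ∣ π ^ b ↔ a ≤ b := by
  constructor
  · intro h
    by_contra hab
    have hb1 : b + 1 ≤ a := by omega
    have : π ^ (b + 1) ∣ (1 : O) * π ^ b := by
      rw [one_mul]; exact dvd_trans (pow_dvd_pow π hb1) h
    exact not_dvd_unit_mul_pow hπ isUnit_one b this
  · exact pow_dvd_pow π

lemma dvd_of_pow_mul_dvd (hπ : Irreducible π) {x : O} {d E : ℕ}
    (h : π ^ (d + E) ∣ π ^ d * x) : π ^ E ∣ x := by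
  obtain ⟨y, hy⟩ := h
  refine ⟨y, mul_left_cancel₀ (pow_ne_zero d hπ.ne_zero) ?_⟩
  rw [hy, pow_add]; ring

lemma piVal_unit_mul_pow (hπ : Irreducible π) {u : O} (hu : IsUnit u) (v : ℕ) :
    piVal π (u * π ^ v) = (v : ℕ∞) := by
  have hset : {k : ℕ | u * π ^ v ∈ Ideal.span {π ^ k}} = Set.Iic v := by
    ext k
    simp only [Set.mem_setOf_eq, Ideal.mem_span_singleton, Set.mem_Iic]
    constructor
    · intro h
      by_contra hk
      have : π ^ (v + 1) ∣ u * π ^ v := dvd_trans (pow_dvd_pow π (by omega)) h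
      exact not_dvd_unit_mul_pow hπ hu v this
    · intro h
      exact Dvd.dvd.mul_left (pow_dvd_pow π h) u
  rw [piVal, hset]
  apply le_antisymm
  · exact iSup₂_le fun k hk => Nat.cast_le.mpr hk
  · exact le_iSup₂ (f := fun (k : ℕ) (_ : k ∈ Set.Iic v) => (k : ℕ∞)) v (Set.mem_Iic.mpr le_rfl)

lemma piVal_zero' (π : O) : piVal π (0 : O) = ⊤ := by
  have hset : {k : ℕ | (0 : O) ∈ Ideal.span {π ^ k}} = Set.univ := by
    ext k; simp [Ideal.zero_mem]
  rw [piVal, hset]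
  simp only [Set.mem_univ, iSup_pos]
  exact ENat.iSup_natCast

end DVR

section ENatInf

lemma biInf_coe_nat (S : Set ℕ) (hS : S.Nonempty) :
    (⨅ h ∈ S, (h : ℕ∞)) = ((sInf S : ℕ) : ℕ∞) :=
  le_antisymm (iInf₂_le _ (Nat.sInf_mem hS))
    (le_iInf₂ fun h hh => Nat.cast_le.mpr (Nat.sInf_le hh))

lemma itilde_le {p n : ℕ} {O : Type*} [CommRing O] {b : ℕ → O} {j h : ℕ}
    (h1 : padicValNat p (h + n) ≤ j) (h2 : b h ≠ 0) : itilde p n b j ≤ (h : ℕ∞) :=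
  iInf₂_le h ⟨h1, h2⟩

lemma itilde_exists {p n : ℕ} {O : Type*} [CommRing O] {b : ℕ → O} {j : ℕ}
    (hne : itilde p n b j ≠ ⊤) :
    ∃ h0 : ℕ, itilde p n b j = (h0 : ℕ∞) ∧ padicValNat p (h0 + n) ≤ j ∧ b h0 ≠ 0 := by
  set S := {h : ℕ | padicValNat p (h + n) ≤ j ∧ b h ≠ 0} with hSdef
  have hS : S.Nonempty := by
    by_contra hS
    rw [Set.not_nonempty_iff_eq_empty] at hS
    have : itilde p n b j = ⊤ := by rw [itilde, ← hSdef, hS]; simp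
    exact hne this
  exact ⟨sInf S, biInf_coe_nat S hS, (Nat.sInf_mem hS).1, (Nat.sInf_mem hS).2⟩

lemma itilde_anti {p n : ℕ} {O : Type*} [CommRing O] {b : ℕ → O} {j j' : ℕ} (h : j ≤ j') :
    itilde p n b j' ≤ itilde p n b j :=
  le_iInf₂ fun h1 hh1 => iInf₂_le h1 ⟨le_trans hh1.1 h, hh1.2⟩

lemma insepIdx_le {p n ν : ℕ} {O : Type*} [CommRing O] {b : ℕ → O} {vLp : ℕ∞} {j j1 : ℕ}
    (h1 : j ≤ j1) (h2 : j1 ≤ ν) :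
    insepIdx p n ν b vLp j ≤ itilde p n b j1 + ((j1 - j : ℕ) : ℕ∞) * vLp :=
  iInf₂_le j1 (Set.mem_Icc.mpr ⟨h1, h2⟩)

lemma insepIdx_exists {p n ν : ℕ} {O : Type*} [CommRing O] (b : ℕ → O) (vLp : ℕ∞) {j : ℕ}
    (hj : j ≤ ν) :
    ∃ j1, j ≤ j1 ∧ j1 ≤ ν ∧
      insepIdx p n ν b vLp j = itilde p n b j1 + ((j1 - j : ℕ) : ℕ∞) * vLp := by
  have key : insepIdx p n ν b vLp j
      = (Finset.Icc j ν).inf (fun j1 => itilde p n b j1 + ((j1 - j : ℕ) : ℕ∞) * vLp) := by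
    rw [insepIdx, Finset.inf_eq_iInf]
    simp only [Set.mem_Icc, Finset.mem_Icc]
  obtain ⟨j1, hj1, hval⟩ := Finset.exists_mem_eq_inf (Finset.Icc j ν)
    ⟨j, Finset.mem_Icc.mpr ⟨le_rfl, hj⟩⟩ (fun j1 => itilde p n b j1 + ((j1 - j : ℕ) : ℕ∞) * vLp)
  rw [Finset.mem_Icc] at hj1
  exact ⟨j1, hj1.1, hj1.2, by rw [key, hval]⟩

lemma insepIdx_anti {p n ν : ℕ} {O : Type*} [CommRing O] {b : ℕ → O} {vLp : ℕ∞} {e j : ℕ}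
    (hej : e ≤ j) (hj : j ≤ ν) :
    insepIdx p n ν b vLp j ≤ insepIdx p n ν b vLp e := by
  apply le_iInf₂
  intro j1 hj1
  rw [Set.mem_Icc] at hj1
  rcases le_or_gt j j1 with hc | hc
  · calc insepIdx p n ν b vLp j ≤ itilde p n b j1 + ((j1 - j : ℕ) : ℕ∞) * vLp :=
          insepIdx_le hc hj1.2
      _ ≤ itilde p n b j1 + ((j1 - e : ℕ) : ℕ∞) * vLp :=
          add_le_add_right (mul_le_mul_left (Nat.cast_le.mpr (by omega)) vLp) _
  · calc insepIdx p n ν b vLp j ≤ itilde p n b j + ((j - j : ℕ) : ℕ∞) * vLp :=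
          insepIdx_le le_rfl hj
      _ = itilde p n b j := by simp
      _ ≤ itilde p n b j1 := itilde_anti (le_of_lt hc)
      _ ≤ itilde p n b j1 + ((j1 - e : ℕ) : ℕ∞) * vLp := le_self_add

lemma insepIdx_top {p n ν : ℕ} {O : Type*} [CommRing O] {b : ℕ → O} {j : ℕ} (hj : j ≤ ν) :
    insepIdx p n ν b ⊤ j = itilde p n b j := by
  apply le_antisymm
  · calc insepIdx p n ν b ⊤ j ≤ itilde p n b j + ((j - j : ℕ) : ℕ∞) * ⊤ :=
        insepIdx_le le_rfl hj
      _ = itilde p n b j := by simp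
  · apply le_iInf₂
    intro j1 hj1
    rw [Set.mem_Icc] at hj1
    rcases eq_or_lt_of_le hj1.1 with hc | hc
    · subst hc; simp
    · have : ((j1 - j : ℕ) : ℕ∞) * ⊤ = ⊤ := by
        apply ENat.mul_top
        simp only [ne_eq, Nat.cast_eq_zero]
        omega
      rw [this, add_top]
      exact le_top

end ENatInf

section Core

variable {O : Type*} [CommRing O] [IsDomain O]

lemma core_not_dvd
    (p : ℕ) [hp : Fact p.Prime] {π : O} (hπ : Irreducible π)
    (hcop : ∀ C : ℕ, ¬ p ∣ C → IsUnit (C : O))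
    (n ν : ℕ) (hn : 0 < n) (hvpn : padicValNat p n = ν)
    (b : ℕ → O) (hbu : ∀ t, b t ≠ 0 → IsUnit (b t)) (hb0 : b 0 ≠ 0)
    (hP : (p : O) = 0 ∨
      ∃ (u : O) (v : ℕ), IsUnit u ∧ (p : O) = u * π ^ v ∧ 1 ≤ v ∧ ν ≤ padicValNat p v)
    (ii : ℕ → ℕ)
    (hii : ∀ j' ≤ ν, (ii j' : ℕ∞) = insepIdx p n ν b (piVal π (p : O)) j')
    (J : ℕ) (hJ : J ≤ ν)
    (HA : ∀ e < J, ii e ≠ ii J) :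
    ¬ (π ^ (n + ii J + 1) ∣
      ∑ t ∈ Finset.range (ii J + 1), b t * π ^ (t + n) * ((t + n).choose (p ^ J) : O)) := by
  have hpν_le_n : p ^ ν ≤ n := by
    have h := pow_padicValNat_dvd (p := p) (n := n)
    rw [hvpn] at h
    exact Nat.le_of_dvd hn h
  have hpJ_le : ∀ t : ℕ, p ^ J ≤ t + n := fun t =>
    le_trans (Nat.pow_le_pow_right hp.out.pos hJ) (le_trans hpν_le_n (Nat.le_add_left n t))
  have hC_pos : ∀ t : ℕ, 0 < (t + n).choose (p ^ J) := fun t => Nat.choose_pos (hpJ_le t)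
  have iianti : ∀ e ≤ J, ii J ≤ ii e := by
    intro e he
    have h1 := hii e (le_trans he hJ)
    have h2 := hii J hJ
    have h3 : (ii J : ℕ∞) ≤ (ii e : ℕ∞) := by
      rw [h1, h2]; exact insepIdx_anti he hJ
    exact_mod_cast h3
  have HAcontra : ∀ t, t ≤ ii J → b t ≠ 0 → padicValNat p (t + n) < J → False := by
    intro t ht hbt he
    set e := padicValNat p (t + n) with hedef
    have h1 := hii e (by omega)
    have h2 : insepIdx p n ν b (piVal π (p : O)) e ≤ itilde p n b e := by
      have := insepIdx_le (p := p) (n := n) (ν := ν) (b := b)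
        (vLp := piVal π (p : O)) (j := e) (j1 := e) le_rfl (by omega)
      simpa using this
    have h3 : itilde p n b e ≤ (t : ℕ∞) := itilde_le le_rfl hbt
    have h4 : (ii e : ℕ∞) ≤ (t : ℕ∞) := by rw [h1]; exact h2.trans h3
    have h5 : ii e ≤ t := by exact_mod_cast h4
    have h6 : ii J ≤ ii e := iianti e (by omega)
    exact HA e (by omega) (by omega)
  rcases hP with hO | ⟨u, v, huu, hpuv, hv1, hνv⟩
  · -- residue characteristic case : (p : O) = 0
    have hiJ : (ii J : ℕ∞) = itilde p n b J := by
      rw [hii J hJ, hO, piVal_zero', insepIdx_top hJ]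
    obtain ⟨h0, hh0eq, hh0vp, hh0ne⟩ := itilde_exists (p := p) (n := n) (b := b) (j := J)
      (by rw [← hiJ]; exact ENat.coe_ne_top _)
    have h0I : h0 = ii J := by
      have : (h0 : ℕ∞) = (ii J : ℕ∞) := by rw [← hh0eq, hiJ]
      exact_mod_cast this
    subst h0I
    have hmin : ∀ h', padicValNat p (h' + n) ≤ J → b h' ≠ 0 → ii J ≤ h' := by
      intro h' hvp hb
      have := itilde_le (p := p) (n := n) (b := b) (j := J) hvp hb
      rw [← hiJ] at this
      exact_mod_cast this
    have key : ¬ p ∣ (ii J + n).choose (p ^ J) := by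
      intro hdvd
      rcases eq_or_lt_of_le hh0vp with hc | hc
      · have hpJdvd : p ^ J ∣ (ii J + n) := by
          have hh := pow_padicValNat_dvd (p := p) (n := ii J + n)
          rwa [hc] at hh
        have hex := choose_val_exact (p := p) J (ii J + n) (by omega) hpJdvd
        have hzero : padicValNat p ((ii J + n).choose (p ^ J)) = 0 := by omega
        have hone : (1 : ℕ) ≤ padicValNat p ((ii J + n).choose (p ^ J)) :=
          (padicValNat_dvd_iff_le (hC_pos (ii J)).ne').mp (by rw [pow_one]; exact hdvd)
        omega
      · exact HAcontra (ii J) le_rfl hh0ne hc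
    have hzero_terms : ∀ t ∈ Finset.range (ii J + 1), t ≠ ii J →
        b t * π ^ (t + n) * ((t + n).choose (p ^ J) : O) = 0 := by
      intro t htm htne
      rw [Finset.mem_range] at htm
      by_cases hbt : b t = 0
      · rw [hbt]; ring
      by_cases hpC : p ∣ (t + n).choose (p ^ J)
      · obtain ⟨d, hd⟩ := hpC
        have : (((t + n).choose (p ^ J) : ℕ) : O) = 0 := by
          rw [hd]; push_cast; rw [hO]; ring
        rw [this]; ring
      · have h1 : padicValNat p ((t + n).choose (p ^ J)) = 0 :=
          padicValNat.eq_zero_of_not_dvd hpC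
        have h2 := choose_val_lower (p := p) J (t + n) (hpJ_le t)
        have h3 := hmin t (by omega) hbt
        omega
    rw [Finset.sum_eq_single (ii J) hzero_terms
      (fun hni => absurd (Finset.self_mem_range_succ (ii J)) hni)]
    have hrw : b (ii J) * π ^ (ii J + n) * ((ii J + n).choose (p ^ J) : O)
        = (b (ii J) * ((ii J + n).choose (p ^ J) : O)) * π ^ (ii J + n) := by ring
    rw [hrw]
    have hexp : n + ii J + 1 = (ii J + n) + 1 := by omega
    rw [hexp]
    exact not_dvd_unit_mul_pow hπ ((hbu _ hh0ne).mul (hcop _ key)) _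
  · -- mixed characteristic case
    have hvLp : piVal π (p : O) = (v : ℕ∞) := by rw [hpuv, piVal_unit_mul_pow hπ huu]
    set I := ii J with hIdef
    have fact1 : ∀ j1, J ≤ j1 → j1 ≤ ν → ∀ t, padicValNat p (t + n) ≤ j1 → b t ≠ 0 →
        I ≤ t + (j1 - J) * v := by
      intro j1 hj1J hj1ν t hvp hbt
      have h1 := hii J hJ
      have h2 := insepIdx_le (p := p) (n := n) (ν := ν) (b := b)
        (vLp := piVal π (p : O)) (j := J) (j1 := j1) hj1J hj1ν
      have h3 : itilde p n b j1 ≤ (t : ℕ∞) := itilde_le hvp hbt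
      have h4 : (I : ℕ∞) ≤ ((t + (j1 - J) * v : ℕ) : ℕ∞) := by
        rw [hIdef, h1]
        calc insepIdx p n ν b (piVal π (p : O)) J
            ≤ itilde p n b j1 + ((j1 - J : ℕ) : ℕ∞) * piVal π (p : O) := h2
          _ ≤ (t : ℕ∞) + ((j1 - J : ℕ) : ℕ∞) * (v : ℕ∞) := by
              rw [hvLp]; exact add_le_add_left h3 _
          _ = ((t + (j1 - J) * v : ℕ) : ℕ∞) := by push_cast; ring
      exact_mod_cast h4
    -- attainment
    obtain ⟨j1s, hj1s1, hj1s2, hval⟩ := insepIdx_exists (p := p) (n := n) b (piVal π (p : O)) hJ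
    have hitne : itilde p n b j1s ≠ ⊤ := by
      intro htop
      have h1 := hii J hJ
      rw [hval, htop, top_add] at h1
      exact (ENat.coe_ne_top I) h1
    obtain ⟨t0, ht0eq, ht0vp, ht0ne⟩ := itilde_exists hitne
    set wstar := j1s - J with hwstardef
    have hIt0 : I = t0 + wstar * v := by
      have h1 := hii J hJ
      rw [hval, ht0eq, hvLp] at h1
      have : (I : ℕ∞) = ((t0 + wstar * v : ℕ) : ℕ∞) := by
        rw [h1]; push_cast; ring
      exact_mod_cast this
    have ht0leI : t0 ≤ I := by omega
    have hjswstar : j1s = J + wstar := by omega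
    -- exact p-adic valuation data for t0
    have he0J : J ≤ padicValNat p (t0 + n) := by
      by_contra hcon
      exact HAcontra t0 ht0leI ht0ne (by omega)
    have hpJdvd0 : p ^ J ∣ (t0 + n) :=
      dvd_trans (pow_dvd_pow p he0J) pow_padicValNat_dvd
    have hw0ex := choose_val_exact (p := p) J (t0 + n) (by omega) hpJdvd0
    set w0 := padicValNat p ((t0 + n).choose (p ^ J)) with hw0def
    have hw0le : w0 ≤ wstar := by
      have := ht0vp; rw [hjswstar] at this; omega
    have hw0eq : w0 = wstar := by
      by_contra hne
      have hw0lt : w0 < wstar := by omega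
      have hf := fact1 (J + w0) (by omega) (by omega) t0 (by omega) ht0ne
      have hsplit : (J + w0 - J) = w0 := by omega
      rw [hsplit] at hf
      have hmul : w0 * v + v ≤ wstar * v := by
        have h1 : (w0 + 1) * v ≤ wstar * v := Nat.mul_le_mul_right v (by omega)
        have h2 : (w0 + 1) * v = w0 * v + v := by ring
        omega
      omega
    -- generic term decomposition
    have termfact : ∀ t, b t ≠ 0 → ∃ cu : O, IsUnit cu ∧
        b t * π ^ (t + n) * ((t + n).choose (p ^ J) : O)
          = cu * π ^ (t + n + padicValNat p ((t + n).choose (p ^ J)) * v) := by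
      intro t hbt
      set C := (t + n).choose (p ^ J) with hCdef
      set w := padicValNat p C with hwdef
      have hCpos : 0 < C := hC_pos t
      obtain ⟨C', hC'⟩ := pow_padicValNat_dvd (p := p) (n := C)
      rw [← hwdef] at hC'
      have hpC' : ¬ p ∣ C' := by
        intro hd
        have : p ^ (w + 1) ∣ C := by
          rw [hC', pow_succ]
          exact mul_dvd_mul (dvd_refl _) hd
        exact pow_succ_padicValNat_not_dvd hCpos.ne' this
      have hcast : (C : O) = (u ^ w * (C' : O)) * π ^ (w * v) := by
        rw [hC']
        push_cast
        rw [hpuv, mul_pow, ← pow_mul, mul_comm v w]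
        ring
      refine ⟨b t * (u ^ w * (C' : O)), (hbu t hbt).mul ((huu.pow w).mul (hcop C' hpC')), ?_⟩
      rw [hcast, pow_add]
      ring
    -- claim B1 : lower bound
    have B1 : ∀ t, b t ≠ 0 → I ≤ t + padicValNat p ((t + n).choose (p ^ J)) * v := by
      intro t hbt
      set w := padicValNat p ((t + n).choose (p ^ J)) with hwdef
      have hvp : padicValNat p (t + n) ≤ J + w := choose_val_lower J (t + n) (hpJ_le t)
      by_cases hc : J + w ≤ ν
      · have hf := fact1 (J + w) (by omega) hc t hvp hbt
        have : (J + w - J) = w := by omega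
        rw [this] at hf; exact hf
      · have hIle : I ≤ (ν - J) * v := by
          have hf := fact1 ν hJ le_rfl 0 (by rw [zero_add, hvpn]) hb0
          omega
        have hwge : ν - J + 1 ≤ w := by omega
        have h1 : (ν - J + 1) * v ≤ w * v := Nat.mul_le_mul_right v hwge
        have h2 : (ν - J + 1) * v = (ν - J) * v + v := by ring
        omega
    -- claim B2 : uniqueness of minimal term
    have B2 : ∀ t, b t ≠ 0 → t + padicValNat p ((t + n).choose (p ^ J)) * v = I → t = t0 := by
      intro t hbt heq
      set w := padicValNat p ((t + n).choose (p ^ J)) with hwdef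
      have hvp : padicValNat p (t + n) ≤ J + w := choose_val_lower J (t + n) (hpJ_le t)
      have htleI : t ≤ I := by omega
      have hc : J + w ≤ ν := by
        by_contra hc
        have hIle : I ≤ (ν - J) * v := by
          have hf := fact1 ν hJ le_rfl 0 (by rw [zero_add, hvpn]) hb0
          omega
        have hwge : ν - J + 1 ≤ w := by omega
        have h1 : (ν - J + 1) * v ≤ w * v := Nat.mul_le_mul_right v hwge
        have h2 : (ν - J + 1) * v = (ν - J) * v + v := by ring
        omega
      have heJ : J ≤ padicValNat p (t + n) := by
        by_contra hcon
        exact HAcontra t htleI hbt (by omega)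
      have hpJdvd : p ^ J ∣ (t + n) := dvd_trans (pow_dvd_pow p heJ) pow_padicValNat_dvd
      have hexact := choose_val_exact (p := p) J (t + n) (by omega) hpJdvd
      -- padicValNat p (t+n) = w + J ; padicValNat p (t0+n) = wstar + J
      have he0exact : padicValNat p (t0 + n) = wstar + J := by omega
      have heexact : padicValNat p (t + n) = w + J := by omega
      rcases lt_trichotomy w wstar with hlt | heqw | hgt
      · exfalso
        have hsplit : (wstar - w) * v + w * v = wstar * v := by
          rw [← Nat.add_mul]; congr 1; omega
        have hteq : t + n = (t0 + n) + (wstar - w) * v := by omega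
        have hd1 : p ^ (J + w + 1) ∣ (t0 + n) := by
          apply dvd_trans (pow_dvd_pow p (show J + w + 1 ≤ padicValNat p (t0 + n) by omega))
          exact pow_padicValNat_dvd
        have hd2 : p ^ (J + w + 1) ∣ (wstar - w) * v := by
          apply Dvd.dvd.mul_left
          apply dvd_trans (pow_dvd_pow p (show J + w + 1 ≤ padicValNat p v by omega))
          exact pow_padicValNat_dvd
        have hd3 : p ^ (J + w + 1) ∣ (t + n) := by
          rw [hteq]; exact dvd_add hd1 hd2
        have := pow_succ_padicValNat_not_dvd (show t + n ≠ 0 by omega) (p := p)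
        rw [heexact] at this
        exact this (by convert hd3 using 2; omega)
      · rw [heqw] at heq; omega
      · exfalso
        have hsplit : (w - wstar) * v + wstar * v = w * v := by
          rw [← Nat.add_mul]; congr 1; omega
        have hteq : t0 + n = (t + n) + (w - wstar) * v := by omega
        have hd1 : p ^ (J + wstar + 1) ∣ (t + n) := by
          apply dvd_trans (pow_dvd_pow p (show J + wstar + 1 ≤ padicValNat p (t + n) by omega))
          exact pow_padicValNat_dvd
        have hd2 : p ^ (J + wstar + 1) ∣ (w - wstar) * v := by
          apply Dvd.dvd.mul_left
          apply dvd_trans (pow_dvd_pow p (show J + wstar + 1 ≤ padicValNat p v by omega))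
          exact pow_padicValNat_dvd
        have hd3 : p ^ (J + wstar + 1) ∣ (t0 + n) := by
          rw [hteq]; exact dvd_add hd1 hd2
        have := pow_succ_padicValNat_not_dvd (show t0 + n ≠ 0 by omega) (p := p)
        rw [he0exact] at this
        exact this (by convert hd3 using 2; omega)
    -- final assembly
    intro hdvd
    have ht0mem : t0 ∈ Finset.range (I + 1) := Finset.mem_range.mpr (by omega)
    have hrest : π ^ (n + I + 1) ∣
        ∑ t ∈ (Finset.range (I + 1)).erase t0,
          b t * π ^ (t + n) * ((t + n).choose (p ^ J) : O) := by
      apply Finset.dvd_sum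
      intro t htm
      have htne : t ≠ t0 := Finset.ne_of_mem_erase htm
      by_cases hbt : b t = 0
      · rw [hbt]
        simp
      obtain ⟨cu, hcu, hterm⟩ := termfact t hbt
      rw [hterm]
      have hlb := B1 t hbt
      have hne' : t + padicValNat p ((t + n).choose (p ^ J)) * v ≠ I := fun h => htne (B2 t hbt h)
      exact Dvd.dvd.mul_left (pow_dvd_pow π (by omega)) cu
    have hsum := Finset.add_sum_erase (Finset.range (I + 1))
      (fun t => b t * π ^ (t + n) * ((t + n).choose (p ^ J) : O)) ht0mem
    have ht0dvd : π ^ (n + I + 1) ∣ b t0 * π ^ (t0 + n) * ((t0 + n).choose (p ^ J) : O) := by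
      have : b t0 * π ^ (t0 + n) * ((t0 + n).choose (p ^ J) : O)
          = (∑ t ∈ Finset.range (I + 1), b t * π ^ (t + n) * ((t + n).choose (p ^ J) : O))
            - ∑ t ∈ (Finset.range (I + 1)).erase t0,
                b t * π ^ (t + n) * ((t + n).choose (p ^ J) : O) := by
        rw [← hsum]; ring
      rw [this]
      exact dvd_sub hdvd hrest
    obtain ⟨cu, hcu, hterm⟩ := termfact t0 ht0ne
    rw [hterm] at ht0dvd
    rw [← hw0def] at ht0dvd
    have hexp : t0 + n + w0 * v = n + I := by rw [hw0eq]; omega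
    rw [hexp] at ht0dvd
    have hexp2 : n + I + 1 = (n + I) + 1 := rfl
    exact not_dvd_unit_mul_pow hπ hcu (n + I) ht0dvd
end Core
section Delta

open PowerSeries

lemma delta_coeff_dvd {O : Type*} [CommRing O] (π : O) {p : ℕ} (hp : 1 < p) (ν J : ℕ)
    (hJν : J ≤ ν)
    (E : ℕ → ℕ)
    (hE1 : ∀ j' ≤ ν, j' ≤ J → E J ≤ E j')
    (hE2 : ∀ j' ≤ ν, j' < J → E J + 1 ≤ E j')
    (δ : PowerSeries O)
    (hδ : δ ∈ Ideal.span {(C (R := O)) π, (X : PowerSeries O)} *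
      Ideal.span {f : PowerSeries O | ∃ j' ≤ ν,
        f = (C (R := O)) (π ^ E j') * (X : PowerSeries O) ^ p ^ j'}) :
    π ^ (E J + 1) ∣ (coeff (R := O) (p ^ J)) δ := by
  set S : Set (PowerSeries O) :=
    {f : PowerSeries O | ∃ j' ≤ ν, f = (C (R := O)) (π ^ E j') * (X : PowerSeries O) ^ p ^ j'} with hSdef
  set Jv : ℕ → Ideal O :=
    fun d => Ideal.span ((fun j' => π ^ E j') '' {j' : ℕ | j' ≤ ν ∧ p ^ j' ≤ d}) with hJvdef
  have Jmono : ∀ {d d' : ℕ}, d ≤ d' → Jv d ≤ Jv d' := by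
    intro d d' hdd'
    apply Ideal.span_mono
    apply Set.image_mono
    intro j' hj'
    exact ⟨hj'.1, le_trans hj'.2 hdd'⟩
  have Qy : ∀ y ∈ Ideal.span S, ∀ d : ℕ, (coeff (R := O) d) y ∈ Jv d := by
    intro y hy
    induction hy using Submodule.span_induction with
    | mem f hf =>
        obtain ⟨j', hj', rfl⟩ := hf
        intro d
        rw [coeff_C_mul, coeff_X_pow]
        by_cases hd : d = p ^ j'
        · rw [if_pos hd, mul_one]
          exact Ideal.subset_span ⟨j', ⟨hj', le_of_eq hd.symm⟩, rfl⟩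
        · rw [if_neg hd, mul_zero]
          exact Ideal.zero_mem _
    | zero => intro d; simp only [map_zero]; exact Ideal.zero_mem _
    | add f g _ _ hf hg => intro d; rw [map_add]; exact Ideal.add_mem _ (hf d) (hg d)
    | smul a f _ hf =>
        intro d
        rw [smul_eq_mul, coeff_mul]
        apply Ideal.sum_mem
        intro q hq
        rw [Finset.HasAntidiagonal.mem_antidiagonal] at hq
        exact Ideal.mul_mem_left _ _ (Jmono (by omega) (hf q.2))
  have hJv_le1 : Jv (p ^ J) ≤ Ideal.span {π ^ E J} := by
    rw [hJvdef, Ideal.span_le]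
    rintro x ⟨j', ⟨hj'ν, hj'le⟩, rfl⟩
    rw [SetLike.mem_coe, Ideal.mem_span_singleton]
    exact pow_dvd_pow π (hE1 j' hj'ν ((Nat.pow_le_pow_iff_right hp).mp hj'le))
  have hJv_le2 : Jv (p ^ J - 1) ≤ Ideal.span {π ^ (E J + 1)} := by
    rw [hJvdef, Ideal.span_le]
    rintro x ⟨j', ⟨hj'ν, hj'le⟩, rfl⟩
    rw [SetLike.mem_coe, Ideal.mem_span_singleton]
    have hppos : 0 < p ^ J := pow_pos (by omega) J
    have : p ^ j' < p ^ J := by omega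
    exact pow_dvd_pow π (hE2 j' hj'ν ((Nat.pow_lt_pow_iff_right hp).mp this))
  refine Submodule.mul_induction_on (C := fun z => π ^ (E J + 1) ∣ (coeff (R := O) (p ^ J)) z)
    hδ ?_ ?_
  · intro x hx y hy
    obtain ⟨f, g, hfg⟩ := Ideal.mem_span_pair.mp hx
    have hxy : x * y = (C (R := O)) π * (f * y) + X * (g * y) := by rw [← hfg]; ring
    rw [hxy, map_add]
    apply dvd_add
    · rw [coeff_C_mul]
      have h1 : (coeff (R := O) (p ^ J)) (f * y) ∈ Ideal.span {π ^ E J} := by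
        apply hJv_le1
        rw [coeff_mul]
        apply Ideal.sum_mem
        intro q hq
        rw [Finset.HasAntidiagonal.mem_antidiagonal] at hq
        exact Ideal.mul_mem_left _ _ (Jmono (by omega) (Qy y hy q.2))
      rw [Ideal.mem_span_singleton] at h1
      obtain ⟨z, hz⟩ := h1
      rw [hz, pow_succ]
      exact ⟨z, by ring⟩
    · have hpJ : p ^ J = (p ^ J - 1) + 1 := by
        have : 0 < p ^ J := pow_pos (by omega) J
        omega
      rw [hpJ, coeff_succ_X_mul]
      have h2 : (coeff (R := O) (p ^ J - 1)) (g * y) ∈ Ideal.span {π ^ (E J + 1)} := by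
        apply hJv_le2
        rw [coeff_mul]
        apply Ideal.sum_mem
        intro q hq
        rw [Finset.HasAntidiagonal.mem_antidiagonal] at hq
        exact Ideal.mul_mem_left _ _ (Jmono (by omega) (Qy y hy q.2))
      rwa [Ideal.mem_span_singleton] at h2
  · intro x y hx hy
    rw [map_add]; exact dvd_add hx hy

end Delta

section Transfer

lemma alg_inj {A B : Type*} [CommRing A] [IsDomain A] [IsDiscreteValuationRing A]
    [CommRing B] [IsDomain B] (f : A →+* B) {πA : A} (hπA : Irreducible πA)
    {πB : B} (hπB : Irreducible πB) {n : ℕ}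
    (htot : Associated (f πA) (πB ^ n)) : Function.Injective f := by
  have hker : ∀ x : A, f x = 0 → x = 0 := by
    intro x hx
    by_contra hx0
    obtain ⟨t, u, hdecomp⟩ := IsDiscreteValuationRing.eq_unit_mul_pow_irreducible hx0 hπA
    have hfπA : f πA ≠ 0 := by
      intro h0
      obtain ⟨w, hw⟩ := htot
      rw [h0, zero_mul] at hw
      exact pow_ne_zero n hπB.ne_zero hw.symm
    have hfu : IsUnit (f (u : A)) := u.isUnit.map f
    have heq : f x = f (u : A) * (f πA) ^ t := by rw [hdecomp, map_mul, map_pow]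
    rw [hx] at heq
    exact mul_ne_zero hfu.ne_zero (pow_ne_zero t hfπA) heq.symm
  intro a b hab
  have h0 : f (a - b) = 0 := by rw [map_sub, hab, sub_self]
  exact sub_eq_zero.mp (hker _ h0)

lemma charP_residue_transfer {A B : Type*} [CommRing A] [IsLocalRing A]
    [CommRing B] [IsLocalRing B] (f : A →+* B)
    (hmax : ∀ a ∈ IsLocalRing.maximalIdeal A, f a ∈ IsLocalRing.maximalIdeal B)
    (p : ℕ) [CharP (IsLocalRing.ResidueField A) p] :
    CharP (IsLocalRing.ResidueField B) p := by
  let g : IsLocalRing.ResidueField A →+* IsLocalRing.ResidueField B :=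
    Ideal.Quotient.lift (IsLocalRing.maximalIdeal A)
      ((IsLocalRing.residue B).comp f)
      (fun a ha => by
        simp only [RingHom.comp_apply]
        exact Ideal.Quotient.eq_zero_iff_mem.mpr (hmax a ha))
  exact charP_of_injective_ringHom g.injective p

lemma natCast_isUnit {B : Type*} [CommRing B] [IsLocalRing B] (p : ℕ) [Fact p.Prime]
    [CharP (IsLocalRing.ResidueField B) p] (C : ℕ) (hC : ¬ p ∣ C) : IsUnit (C : B) := by
  rw [← IsLocalRing.notMem_maximalIdeal]
  intro hmem
  have h0 : (IsLocalRing.residue B) (C : B) = 0 := Ideal.Quotient.eq_zero_iff_mem.mpr hmem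
  rw [map_natCast] at h0
  exact hC ((CharP.cast_eq_zero_iff (IsLocalRing.ResidueField B) p C).mp h0)

lemma TR_isUnit {B : Type*} [CommRing B] [IsLocalRing B] {TR : Set B} (hTR0 : (0 : B) ∈ TR)
    (hbij : Set.BijOn (IsLocalRing.residue B) TR Set.univ) {x : B} (hx : x ∈ TR)
    (hxne : x ≠ 0) : IsUnit x := by
  rw [← IsLocalRing.notMem_maximalIdeal]
  intro hmem
  have h0 : (IsLocalRing.residue B) x = 0 := Ideal.Quotient.eq_zero_iff_mem.mpr hmem
  exact hxne (hbij.injOn hx hTR0 (by rw [h0, map_zero]))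

lemma itilde_map {p n : ℕ} {A B : Type*} [CommRing A] [CommRing B] (f : A →+* B)
    (hf : Function.Injective f) (aF : ℕ → A) (j : ℕ) :
    itilde p n (fun h => f (aF h)) j = itilde p n aF j := by
  have hset : {h : ℕ | padicValNat p (h + n) ≤ j ∧ f (aF h) ≠ 0}
      = {h : ℕ | padicValNat p (h + n) ≤ j ∧ aF h ≠ 0} := by
    ext h
    simp [map_eq_zero_iff f hf]
  unfold itilde
  rw [hset]

lemma insepIdx_map {p n ν : ℕ} {A B : Type*} [CommRing A] [CommRing B] (f : A →+* B)
    (hf : Function.Injective f) (aF : ℕ → A) (vLp : ℕ∞) (j : ℕ) :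
    insepIdx p n ν (fun h => f (aF h)) vLp j = insepIdx p n ν aF vLp j := by
  unfold insepIdx
  simp only [itilde_map f hf]

lemma vp_eq {p a ν n : ℕ} [hp : Fact p.Prime] (h : n = a * p ^ ν) (hpa : ¬ p ∣ a)
    (hn : 0 < n) : padicValNat p n = ν := by
  subst h
  have ha : a ≠ 0 := by rintro rfl; simp at hn
  rw [padicValNat.mul ha (pow_ne_zero ν hp.out.pos.ne'),
    padicValNat.eq_zero_of_not_dvd hpa, padicValNat.prime_pow, zero_add]

end Transfer

open PowerSeries in
/-- Lemma `rjsk`.  Let `c ∈ ℕ₀ ∩ T_l(M/K)`, let `l₀` be the integer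
specified in the definition of `T_l(M/K)` for `t = c`, and let `(j,k)` be the unique
element of `Ω_{l₀}` with `λ^l_{M/K}(c) = φ̃^{j,m}_{L/K}(φ̃^k_{M/L}(c))`.  If
`r_0, …, r_ν, s_0, …, s_μ ∈ R`, `δ_F ∈ (π_L,ε)·I_F`, `δ_G ∈ (π_M,ε)·I'_G` satisfy
`F̂(π_L(1+ε)) = π_K·(1 + Σ_{j'} r_{j'} π_L^{i_{j'}} ε^{p^{j'}} + δ_F)` and
`Ĝ(π_M(1+π_M^c ε)) = π_L·(1 + Σ_{k'} s_{k'} π_M^{φ̃^{k'}_{M/L}(c)} ε^{p^{k'}} + δ_G)`,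
then `r_j ≠ 0` and `s_k ≠ 0`. -/
theorem stmt15
    (p : ℕ) [hp : Fact p.Prime]
    (OK : Type) [CommRing OK] [IsDomain OK] [IsDiscreteValuationRing OK]
    [IsAdicComplete (IsLocalRing.maximalIdeal OK) OK]
    [CharP (IsLocalRing.ResidueField OK) p] [PerfectRing (IsLocalRing.ResidueField OK) p]
    (OL : Type) [CommRing OL] [IsDomain OL] [IsDiscreteValuationRing OL]
    [IsAdicComplete (IsLocalRing.maximalIdeal OL) OL]
    [Algebra OK OL]
    (OM : Type) [CommRing OM] [IsDomain OM] [IsDiscreteValuationRing OM]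
    [IsAdicComplete (IsLocalRing.maximalIdeal OM) OM]
    [Algebra OL OM] [Algebra OK OM] [IsScalarTower OK OL OM]
    (K L M : Type) [Field K] [Field L] [Field M]
    [Algebra OK K] [IsFractionRing OK K]
    [Algebra OL L] [IsFractionRing OL L]
    [Algebra OM M] [IsFractionRing OM M]
    [Algebra K L] [Algebra OK L] [IsScalarTower OK K L] [IsScalarTower OK OL L]
    [Algebra L M] [Algebra OL M] [IsScalarTower OL L M] [IsScalarTower OL OM M]
    [Algebra K M] [IsScalarTower K L M]
    [Algebra.IsSeparable K L] [FiniteDimensional K L]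
    [Algebra.IsSeparable L M] [FiniteDimensional L M]
    [Algebra.IsSeparable K M]
    -- degrees
    (n a ν : ℕ) (hna : n = a * p ^ ν) (hpa : ¬ p ∣ a) (hn1 : 1 < n)
    (hdeg : Module.finrank K L = n)
    (m b μ : ℕ) (hmb : m = b * p ^ μ) (hpb : ¬ p ∣ b) (hm1 : 1 < m)
    (hdegM : Module.finrank L M = m)
    -- uniformizers, total ramification
    (πK : OK) (hπK : Irreducible πK) (πL : OL) (hπL : Irreducible πL)
    (πM : OM) (hπM : Irreducible πM)
    (htot : Associated (algebraMap OK OL πK) (πL ^ n))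
    (hres : ∀ x : OL, ∃ y : OK, x - algebraMap OK OL y ∈ IsLocalRing.maximalIdeal OL)
    (htotM : Associated (algebraMap OL OM πL) (πM ^ m))
    (hresM : ∀ x : OM, ∃ y : OL, x - algebraMap OL OM y ∈ IsLocalRing.maximalIdeal OM)
    -- Teichmüller representatives of O_K and O_L
    (TR : Set OK) (hTR0 : (0 : OK) ∈ TR)
    (hTRbij : Set.BijOn (IsLocalRing.residue OK) TR Set.univ)
    (hTRmul : ∀ r ∈ TR, ∀ s ∈ TR, r * s ∈ TR)
    (TRL : Set OL) (hTRL0 : (0 : OL) ∈ TRL)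
    (hTRLbij : Set.BijOn (IsLocalRing.residue OL) TRL Set.univ)
    (hTRLmul : ∀ r ∈ TRL, ∀ s ∈ TRL, r * s ∈ TRL)
    -- F̂ : expansion of π_K in π_L, and the indices i_j of L/K
    (aF : ℕ → OK) (haF : ∀ h, aF h ∈ TR)
    (hFeval : ∀ N : ℕ,
      algebraMap OK OL πK - ∑ h ∈ Finset.range N, algebraMap OK OL (aF h) * πL ^ (h + n)
        ∈ Ideal.span {πL ^ (n + N)})
    (iL : ℕ → ℕ)
    (hiL : ∀ j ≤ ν, (iL j : ℕ∞) = insepIdx p n ν aF (piVal πL (p : OL)) j)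
    -- Ĝ : expansion of π_L in π_M, and the indices i'_k of M/L
    (aG : ℕ → OL) (haG : ∀ h, aG h ∈ TRL)
    (hGeval : ∀ N : ℕ,
      algebraMap OL OM πL - ∑ h ∈ Finset.range N, algebraMap OL OM (aG h) * πM ^ (h + m)
        ∈ Ideal.span {πM ^ (m + N)})
    (iM : ℕ → ℕ)
    (hiM : ∀ k ≤ μ, (iM k : ℕ∞) = insepIdx p m μ aG (piVal πM (p : OM)) k)
    -- Ĥ : expansion of π_K in π_M, and the indices i''_l of M/K
    (aH : ℕ → OK) (haH : ∀ h, aH h ∈ TR)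
    (hHeval : ∀ N : ℕ,
      algebraMap OK OM πK
          - ∑ h ∈ Finset.range N, algebraMap OK OM (aH h) * πM ^ (h + n * m)
        ∈ Ideal.span {πM ^ (n * m + N)})
    (iMK : ℕ → ℕ)
    (hiMK : ∀ l ≤ ν + μ, (iMK l : ℕ∞) = insepIdx p (n * m) (ν + μ) aH (piVal πM (p : OM)) l)
    -- c ∈ T_l(M/K), with the corresponding l₀ and the unique pair (j,k) ∈ Ω_{l₀}
    (l : ℕ) (hl : l ≤ ν + μ) (c : ℕ)
    (l0 : ℕ) (hl0 : l0 ≤ l)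
    (hT1 : ∃! jk : ℕ × ℕ, jk ∈ sSetMK p m iL iM ν μ l l0 (c : ℝ))
    (hT2 : ∀ a' < l0, sSetMK p m iL iM ν μ l a' (c : ℝ) = ∅)
    (j k : ℕ) (hjk : ((j, k) : ℕ × ℕ) ∈ sSetMK p m iL iM ν μ l l0 (c : ℝ))
    -- the coefficients r_{j'}, s_{k'} ∈ R and the error terms δ_F, δ_G
    (r : ℕ → OK) (hr : ∀ j' ≤ ν, r j' ∈ TR)
    (s : ℕ → OK) (hs : ∀ k' ≤ μ, s k' ∈ TR)
    (δF : PowerSeries OL)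
    (hδF : δF ∈ Ideal.span {(C (R := OL)) πL, (X : PowerSeries OL)} *
      Ideal.span {f : PowerSeries OL | ∃ j' ≤ ν,
        f = (C (R := OL)) (πL ^ iL j') * (X : PowerSeries OL) ^ (p ^ j')})
    (δG : PowerSeries OM)
    (hδG : δG ∈ Ideal.span {(C (R := OM)) πM, (X : PowerSeries OM)} *
      Ideal.span {f : PowerSeries OM | ∃ k' ≤ μ,
        f = (C (R := OM)) (πM ^ (iM k' + p ^ k' * c)) * (X : PowerSeries OM) ^ (p ^ k')})
    -- FF = F̂(π_L(1+ε)) ∈ O_L[[ε]], coefficientwise (as a π_L-adic limit)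
    (FF : PowerSeries OL)
    (hFFcoeff : ∀ i N : ℕ,
      PowerSeries.coeff (R := OL) i FF
          - ∑ t ∈ Finset.range N,
              algebraMap OK OL (aF t) * πL ^ (t + n) * ((t + n).choose i : OL)
        ∈ Ideal.span {πL ^ (n + N)})
    (hFFeq : FF = (C (R := OL)) (algebraMap OK OL πK) *
      (1 + ∑ j' ∈ Finset.range (ν + 1),
          (C (R := OL)) (algebraMap OK OL (r j') * πL ^ iL j') * (X : PowerSeries OL) ^ (p ^ j')
        + δF))
    -- GG = Ĝ(π_M(1+π_M^c ε)) ∈ O_M[[ε]], coefficientwise (as a π_M-adic limit)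
    (GG : PowerSeries OM)
    (hGGcoeff : ∀ i N : ℕ,
      PowerSeries.coeff (R := OM) i GG
          - πM ^ (c * i) * ∑ t ∈ Finset.range N,
              algebraMap OL OM (aG t) * πM ^ (t + m) * ((t + m).choose i : OM)
        ∈ Ideal.span {πM ^ (m + N)})
    (hGGeq : GG = (C (R := OM)) (algebraMap OL OM πL) *
      (1 + ∑ k' ∈ Finset.range (μ + 1),
          (C (R := OM)) (algebraMap OK OM (s k') * πM ^ (iM k' + p ^ k' * c))
            * (X : PowerSeries OM) ^ (p ^ k')
        + δG)) :
    r j ≠ 0 ∧ s k ≠ 0 := by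
  obtain ⟨hjν, hkμ, hjkl0, hjkeq⟩ := hjk
  have hp1 : 1 < p := hp.out.one_lt
  have hn0 : 0 < n := by omega
  have hm0 : 0 < m := by omega
  -- ====== real-analytic consequences of c ∈ T_l ======
  have hbdd : BddBelow {y : ℝ | ∃ j' k' : ℕ, j' ≤ ν ∧ k' ≤ μ ∧ j' + k' ≤ l ∧
      y = (m : ℝ) * iL j' + (p : ℝ) ^ j' * ((iM k' : ℝ) + (p : ℝ) ^ k' * (c : ℝ))} := by
    refine ⟨0, ?_⟩
    rintro y ⟨j', k', _, _, _, rfl⟩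
    positivity
  have rs1 : ∀ j' k' : ℕ, j' ≤ ν → k' ≤ μ → j' + k' < l0 →
      (m : ℝ) * iL j + (p : ℝ) ^ j * ((iM k : ℝ) + (p : ℝ) ^ k * (c : ℝ))
        < (m : ℝ) * iL j' + (p : ℝ) ^ j' * ((iM k' : ℝ) + (p : ℝ) ^ k' * (c : ℝ)) := by
    intro j' k' h1 h2 h3
    have hmem : (m : ℝ) * iL j' + (p : ℝ) ^ j' * ((iM k' : ℝ) + (p : ℝ) ^ k' * (c : ℝ)) ∈
        {y : ℝ | ∃ j'' k'' : ℕ, j'' ≤ ν ∧ k'' ≤ μ ∧ j'' + k'' ≤ l ∧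
          y = (m : ℝ) * iL j'' + (p : ℝ) ^ j'' * ((iM k'' : ℝ) + (p : ℝ) ^ k'' * (c : ℝ))} :=
      ⟨j', k', h1, h2, by omega, rfl⟩
    have hle : lamMK p m iL iM ν μ l (c : ℝ)
        ≤ (m : ℝ) * iL j' + (p : ℝ) ^ j' * ((iM k' : ℝ) + (p : ℝ) ^ k' * (c : ℝ)) := by
      unfold lamMK
      exact csInf_le hbdd hmem
    rcases eq_or_lt_of_le hle with hceq | hclt
    · exfalso
      have hmem2 : ((j', k') : ℕ × ℕ) ∈ sSetMK p m iL iM ν μ l (j' + k') (c : ℝ) :=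
        ⟨h1, h2, rfl, hceq.symm⟩
      rw [hT2 (j' + k') h3] at hmem2
      exact hmem2
    · rw [hjkeq]
      exact hclt
  have app4 : ∀ j' < j, iL j < iL j' := by
    intro j' hj'
    by_contra hcon
    push_neg at hcon
    have h := rs1 j' k (by omega) hkμ (by omega)
    have hX : (0 : ℝ) ≤ (iM k : ℝ) + (p : ℝ) ^ k * (c : ℝ) := by positivity
    have hpow : (p : ℝ) ^ j' ≤ (p : ℝ) ^ j :=
      pow_le_pow_right₀ (by exact_mod_cast hp1.le) (le_of_lt hj')
    have h1 : (m : ℝ) * iL j' ≤ (m : ℝ) * iL j :=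
      mul_le_mul_of_nonneg_left (Nat.cast_le.mpr hcon) (Nat.cast_nonneg m)
    have h2 : (p : ℝ) ^ j' * ((iM k : ℝ) + (p : ℝ) ^ k * (c : ℝ))
        ≤ (p : ℝ) ^ j * ((iM k : ℝ) + (p : ℝ) ^ k * (c : ℝ)) :=
      mul_le_mul_of_nonneg_right hpow hX
    linarith
  have app3 : ∀ k' < k, iM k + p ^ k * c < iM k' + p ^ k' * c := by
    intro k' hk'
    have h := rs1 j k' hjν (by omega) (by omega)
    have hppos : (0 : ℝ) < (p : ℝ) ^ j := by positivity
    have h2 : (p : ℝ) ^ j * ((iM k : ℝ) + (p : ℝ) ^ k * (c : ℝ))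
        < (p : ℝ) ^ j * ((iM k' : ℝ) + (p : ℝ) ^ k' * (c : ℝ)) := by linarith
    have h3 := (mul_lt_mul_iff_right₀ hppos).mp h2
    have h4 : ((iM k + p ^ k * c : ℕ) : ℝ) < ((iM k' + p ^ k' * c : ℕ) : ℝ) := by
      push_cast
      linarith
    exact_mod_cast h4
  have app2 : ∀ e < k, iM e ≠ iM k := by
    intro e he heq
    have h := rs1 j e hjν (by omega) (by omega)
    have hcast : (iM e : ℝ) = (iM k : ℝ) := by exact_mod_cast heq
    have hppos : (0 : ℝ) < (p : ℝ) ^ j := by positivity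
    have h2 : (iM k : ℝ) + (p : ℝ) ^ k * (c : ℝ) < (iM e : ℝ) + (p : ℝ) ^ e * (c : ℝ) :=
      (mul_lt_mul_iff_right₀ hppos).mp (by linarith)
    rw [hcast] at h2
    have h3 : (p : ℝ) ^ e * (c : ℝ) ≤ (p : ℝ) ^ k * (c : ℝ) :=
      mul_le_mul_of_nonneg_right
        (pow_le_pow_right₀ (by exact_mod_cast hp1.le) (le_of_lt he)) (Nat.cast_nonneg c)
    linarith
  -- ====== algebraic setup ======
  have injKL : Function.Injective (algebraMap OK OL) := alg_inj _ hπK hπL htot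
  have injLM : Function.Injective (algebraMap OL OM) := alg_inj _ hπL hπM htotM
  obtain ⟨w, hw⟩ := htot
  have hπKL : algebraMap OK OL πK = πL ^ n * ↑w⁻¹ := by
    rw [← hw, mul_assoc, Units.mul_inv, mul_one]
  obtain ⟨wM, hwM⟩ := htotM
  have hπLM : algebraMap OL OM πL = πM ^ m * ↑wM⁻¹ := by
    rw [← hwM, mul_assoc, Units.mul_inv, mul_one]
  have hmaxKL : ∀ x ∈ IsLocalRing.maximalIdeal OK,
      algebraMap OK OL x ∈ IsLocalRing.maximalIdeal OL := by
    intro x hx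
    rw [hπK.maximalIdeal_eq, Ideal.mem_span_singleton] at hx
    obtain ⟨y, rfl⟩ := hx
    rw [hπL.maximalIdeal_eq, Ideal.mem_span_singleton, map_mul, hπKL]
    exact Dvd.dvd.mul_right (Dvd.dvd.mul_right (dvd_pow_self πL (by omega)) _) _
  have hmaxLM : ∀ x ∈ IsLocalRing.maximalIdeal OL,
      algebraMap OL OM x ∈ IsLocalRing.maximalIdeal OM := by
    intro x hx
    rw [hπL.maximalIdeal_eq, Ideal.mem_span_singleton] at hx
    obtain ⟨y, rfl⟩ := hx
    rw [hπM.maximalIdeal_eq, Ideal.mem_span_singleton, map_mul, hπLM]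
    exact Dvd.dvd.mul_right (Dvd.dvd.mul_right (dvd_pow_self πM (by omega)) _) _
  haveI hCharL : CharP (IsLocalRing.ResidueField OL) p :=
    charP_residue_transfer (algebraMap OK OL) hmaxKL p
  haveI hCharM : CharP (IsLocalRing.ResidueField OM) p :=
    charP_residue_transfer (algebraMap OL OM) hmaxLM p
  have hvpn : padicValNat p n = ν := vp_eq hna hpa hn0
  have hvpm : padicValNat p m = μ := vp_eq hmb hpb hm0
  have hPL : (p : OL) = 0 ∨ ∃ (u : OL) (v : ℕ),
      IsUnit u ∧ (p : OL) = u * πL ^ v ∧ 1 ≤ v ∧ ν ≤ padicValNat p v := by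
    by_cases hp0 : (p : OL) = 0
    · exact Or.inl hp0
    right
    have hpK0 : (p : OK) ≠ 0 := by
      intro h0
      apply hp0
      rw [← map_natCast (algebraMap OK OL) p, h0, map_zero]
    obtain ⟨vK, uu, hdecomp⟩ := IsDiscreteValuationRing.eq_unit_mul_pow_irreducible hpK0 hπK
    have hvK1 : 1 ≤ vK := by
      rcases Nat.eq_zero_or_pos vK with h0 | h1
      · exfalso
        rw [h0, pow_zero, mul_one] at hdecomp
        have hunit : IsUnit (p : OK) := hdecomp ▸ uu.isUnit
        have hu2 : IsUnit ((p : ℕ) : IsLocalRing.ResidueField OK) := by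
          have := hunit.map (IsLocalRing.residue OK)
          rwa [map_natCast] at this
        rw [CharP.cast_eq_zero (IsLocalRing.ResidueField OK) p] at hu2
        exact hu2.ne_zero rfl
      · exact h1
    refine ⟨algebraMap OK OL (uu : OK) * ((↑w⁻¹ : OL)) ^ vK, n * vK,
      ((uu.isUnit).map _).mul ((w⁻¹).isUnit.pow vK), ?_, ?_, ?_⟩
    · rw [← map_natCast (algebraMap OK OL) p, hdecomp, map_mul, map_pow, hπKL, mul_pow,
        ← pow_mul]
      ring
    · exact Nat.one_le_iff_ne_zero.mpr (by positivity)
    · rw [padicValNat.mul (by omega) (by omega), hvpn]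
      omega
  have hPM : (p : OM) = 0 ∨ ∃ (u : OM) (v : ℕ),
      IsUnit u ∧ (p : OM) = u * πM ^ v ∧ 1 ≤ v ∧ μ ≤ padicValNat p v := by
    by_cases hp0 : (p : OM) = 0
    · exact Or.inl hp0
    right
    have hpL0 : (p : OL) ≠ 0 := by
      intro h0
      apply hp0
      rw [← map_natCast (algebraMap OL OM) p, h0, map_zero]
    obtain ⟨vL, uu, hdecomp⟩ := IsDiscreteValuationRing.eq_unit_mul_pow_irreducible hpL0 hπL
    have hvL1 : 1 ≤ vL := by
      rcases Nat.eq_zero_or_pos vL with h0 | h1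
      · exfalso
        rw [h0, pow_zero, mul_one] at hdecomp
        have hunit : IsUnit (p : OL) := hdecomp ▸ uu.isUnit
        have hu2 : IsUnit ((p : ℕ) : IsLocalRing.ResidueField OL) := by
          have := hunit.map (IsLocalRing.residue OL)
          rwa [map_natCast] at this
        rw [CharP.cast_eq_zero (IsLocalRing.ResidueField OL) p] at hu2
        exact hu2.ne_zero rfl
      · exact h1
    refine ⟨algebraMap OL OM (uu : OL) * ((↑wM⁻¹ : OM)) ^ vL, m * vL,
      ((uu.isUnit).map _).mul ((wM⁻¹).isUnit.pow vL), ?_, ?_, ?_⟩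
    · rw [← map_natCast (algebraMap OL OM) p, hdecomp, map_mul, map_pow, hπLM, mul_pow,
        ← pow_mul]
      ring
    · exact Nat.one_le_iff_ne_zero.mpr (by positivity)
    · rw [padicValNat.mul (by omega) (by omega), hvpm]
      omega
  constructor
  -- ====================== r j ≠ 0 ======================
  · intro hrj
    have hδFc : πL ^ (iL j + 1) ∣ (PowerSeries.coeff (R := OL) (p ^ j)) δF := by
      refine delta_coeff_dvd πL hp1 ν j hjν iL ?_ ?_ δF hδF
      · intro j' _ hj'le
        rcases eq_or_lt_of_le hj'le with rfl | hlt
        · exact le_rfl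
        · exact (app4 j' hlt).le
      · intro j' _ hlt
        exact app4 j' hlt
    have hcoeffFF : (PowerSeries.coeff (R := OL) (p ^ j)) FF
        = algebraMap OK OL πK * (PowerSeries.coeff (R := OL) (p ^ j)) δF := by
      have h1 : (PowerSeries.coeff (R := OL) (p ^ j)) (1 : PowerSeries OL) = 0 := by
        rw [PowerSeries.coeff_one, if_neg (by positivity)]
      have h2 : (PowerSeries.coeff (R := OL) (p ^ j)) (∑ j' ∈ Finset.range (ν + 1),
          (C (R := OL)) (algebraMap OK OL (r j') * πL ^ iL j') * (X : PowerSeries OL) ^ (p ^ j'))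
          = 0 := by
        rw [map_sum]
        apply Finset.sum_eq_zero
        intro j' hj'
        rw [PowerSeries.coeff_C_mul, PowerSeries.coeff_X_pow]
        by_cases hj'j : j' = j
        · subst hj'j
          rw [hrj, map_zero, zero_mul, zero_mul]
        · rw [if_neg (fun hcon => hj'j (Nat.pow_right_injective hp.out.two_le hcon.symm)),
            mul_zero]
      rw [hFFeq, PowerSeries.coeff_C_mul, map_add, map_add, h1, h2, zero_add, zero_add]
    have hdvdFF : πL ^ (n + iL j + 1) ∣ (PowerSeries.coeff (R := OL) (p ^ j)) FF := by
      rw [hcoeffFF, hπKL]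
      obtain ⟨z, hz⟩ := hδFc
      rw [hz]
      exact ⟨↑w⁻¹ * z, by ring⟩
    have hFFc := hFFcoeff (p ^ j) (iL j + 1)
    rw [Ideal.mem_span_singleton] at hFFc
    have hFFc' : πL ^ (n + iL j + 1) ∣ (PowerSeries.coeff (R := OL) (p ^ j)) FF
        - ∑ t ∈ Finset.range (iL j + 1),
            algebraMap OK OL (aF t) * πL ^ (t + n) * ((t + n).choose (p ^ j) : OL) := by
      have heq : n + (iL j + 1) = n + iL j + 1 := by omega
      rwa [heq] at hFFc
    have hdvdSum : πL ^ (n + iL j + 1) ∣ ∑ t ∈ Finset.range (iL j + 1),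
        algebraMap OK OL (aF t) * πL ^ (t + n) * ((t + n).choose (p ^ j) : OL) := by
      have hd := dvd_sub hdvdFF hFFc'
      simpa using hd
    have hb0L : (fun t => algebraMap OK OL (aF t)) 0 ≠ 0 := by
      intro h0
      have h1 := hFeval 1
      rw [Ideal.mem_span_singleton, Finset.sum_range_one] at h1
      simp only at h0
      rw [h0, zero_mul, sub_zero, hπKL] at h1
      have h2 : πL ^ (n + 1) ∣ (↑w⁻¹ : OL) * πL ^ n := by rwa [mul_comm] at h1
      exact not_dvd_unit_mul_pow hπL (w⁻¹).isUnit n h2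
    have hcore := core_not_dvd p hπL (natCast_isUnit p)
      n ν hn0 hvpn (fun t => algebraMap OK OL (aF t))
      (fun t hbt => (TR_isUnit hTR0 hTRbij (haF t)
        (fun h0 => hbt (by rw [h0, map_zero]))).map (algebraMap OK OL))
      hb0L hPL iL
      (fun j' hj' => by
        rw [insepIdx_map (algebraMap OK OL) injKL aF (piVal πL (p : OL)) j']
        exact hiL j' hj')
      j hjν
      (fun e he => (app4 e he).ne')
    exact hcore hdvdSum
  -- ====================== s k ≠ 0 ======================
  · intro hsk
    have hδGc : πM ^ ((iM k + p ^ k * c) + 1) ∣ (PowerSeries.coeff (R := OM) (p ^ k)) δG := by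
      refine delta_coeff_dvd πM hp1 μ k hkμ (fun k' => iM k' + p ^ k' * c) ?_ ?_ δG hδG
      · intro k' _ hk'le
        rcases eq_or_lt_of_le hk'le with rfl | hlt
        · exact le_rfl
        · exact (app3 k' hlt).le
      · intro k' _ hlt
        exact app3 k' hlt
    have hcoeffGG : (PowerSeries.coeff (R := OM) (p ^ k)) GG
        = algebraMap OL OM πL * (PowerSeries.coeff (R := OM) (p ^ k)) δG := by
      have h1 : (PowerSeries.coeff (R := OM) (p ^ k)) (1 : PowerSeries OM) = 0 := by
        rw [PowerSeries.coeff_one, if_neg (by positivity)]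
      have h2 : (PowerSeries.coeff (R := OM) (p ^ k)) (∑ k' ∈ Finset.range (μ + 1),
          (C (R := OM)) (algebraMap OK OM (s k') * πM ^ (iM k' + p ^ k' * c))
            * (X : PowerSeries OM) ^ (p ^ k')) = 0 := by
        rw [map_sum]
        apply Finset.sum_eq_zero
        intro k' hk'
        rw [PowerSeries.coeff_C_mul, PowerSeries.coeff_X_pow]
        by_cases hk'k : k' = k
        · subst hk'k
          rw [hsk, map_zero, zero_mul, zero_mul]
        · rw [if_neg (fun hcon => hk'k (Nat.pow_right_injective hp.out.two_le hcon.symm)),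
            mul_zero]
      rw [hGGeq, PowerSeries.coeff_C_mul, map_add, map_add, h1, h2, zero_add, zero_add]
    have hdvdGG : πM ^ (m + (iM k + p ^ k * c) + 1) ∣ (PowerSeries.coeff (R := OM) (p ^ k)) GG := by
      rw [hcoeffGG, hπLM]
      obtain ⟨z, hz⟩ := hδGc
      rw [hz]
      exact ⟨↑wM⁻¹ * z, by ring⟩
    have hGGc := hGGcoeff (p ^ k) (iM k + p ^ k * c + 1)
    rw [Ideal.mem_span_singleton] at hGGc
    have hGGc' : πM ^ (m + (iM k + p ^ k * c) + 1) ∣ (PowerSeries.coeff (R := OM) (p ^ k)) GG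
        - πM ^ (c * p ^ k) * ∑ t ∈ Finset.range (iM k + p ^ k * c + 1),
            algebraMap OL OM (aG t) * πM ^ (t + m) * ((t + m).choose (p ^ k) : OM) := by
      have heq : m + (iM k + p ^ k * c + 1) = m + (iM k + p ^ k * c) + 1 := by omega
      rwa [heq] at hGGc
    have hdvdS : πM ^ (m + (iM k + p ^ k * c) + 1)
        ∣ πM ^ (c * p ^ k) * ∑ t ∈ Finset.range (iM k + p ^ k * c + 1),
            algebraMap OL OM (aG t) * πM ^ (t + m) * ((t + m).choose (p ^ k) : OM) := by
      have hd := dvd_sub hdvdGG hGGc'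
      simpa using hd
    have hcancel : πM ^ (m + iM k + 1)
        ∣ ∑ t ∈ Finset.range (iM k + p ^ k * c + 1),
            algebraMap OL OM (aG t) * πM ^ (t + m) * ((t + m).choose (p ^ k) : OM) := by
      apply dvd_of_pow_mul_dvd hπM (d := c * p ^ k)
      have heq : c * p ^ k + (m + iM k + 1) = m + (iM k + p ^ k * c) + 1 := by
        have hcomm : p ^ k * c = c * p ^ k := mul_comm _ _
        omega
      rwa [heq]
    have hsplit : (∑ t ∈ Finset.range (iM k + p ^ k * c + 1),
            algebraMap OL OM (aG t) * πM ^ (t + m) * ((t + m).choose (p ^ k) : OM))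
        = (∑ t ∈ Finset.range (iM k + 1),
            algebraMap OL OM (aG t) * πM ^ (t + m) * ((t + m).choose (p ^ k) : OM))
          + ∑ t ∈ Finset.Ico (iM k + 1) (iM k + p ^ k * c + 1),
            algebraMap OL OM (aG t) * πM ^ (t + m) * ((t + m).choose (p ^ k) : OM) := by
      simp only [Finset.range_eq_Ico]
      rw [Finset.sum_Ico_consecutive _ (Nat.zero_le _) (by omega : iM k + 1 ≤ iM k + p ^ k * c + 1)]
    have hchunk2 : πM ^ (m + iM k + 1)
        ∣ ∑ t ∈ Finset.Ico (iM k + 1) (iM k + p ^ k * c + 1),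
            algebraMap OL OM (aG t) * πM ^ (t + m) * ((t + m).choose (p ^ k) : OM) := by
      apply Finset.dvd_sum
      intro t ht
      rw [Finset.mem_Ico] at ht
      calc πM ^ (m + iM k + 1) ∣ πM ^ (t + m) := pow_dvd_pow πM (by omega)
        _ ∣ algebraMap OL OM (aG t) * πM ^ (t + m) * ((t + m).choose (p ^ k) : OM) :=
          ⟨algebraMap OL OM (aG t) * ((t + m).choose (p ^ k) : OM), by ring⟩
    have hb0M : (fun t => algebraMap OL OM (aG t)) 0 ≠ 0 := by
      intro h0
      have h1 := hGeval 1
      rw [Ideal.mem_span_singleton, Finset.sum_range_one] at h1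
      simp only at h0
      rw [h0, zero_mul, sub_zero, hπLM] at h1
      have h2 : πM ^ (m + 1) ∣ (↑wM⁻¹ : OM) * πM ^ m := by rwa [mul_comm] at h1
      exact not_dvd_unit_mul_pow hπM (wM⁻¹).isUnit m h2
    have hcore := core_not_dvd p hπM (natCast_isUnit p)
      m μ hm0 hvpm (fun t => algebraMap OL OM (aG t))
      (fun t hbt => (TR_isUnit hTRL0 hTRLbij (haG t)
        (fun h0 => hbt (by rw [h0, map_zero]))).map (algebraMap OL OM))
      hb0M hPM iM
      (fun k' hk' => by
        rw [insepIdx_map (algebraMap OL OM) injLM aG (piVal πM (p : OM)) k']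
        exact hiM k' hk')
      k hkμ app2
    apply hcore
    have hrw : (∑ t ∈ Finset.range (iM k + 1),
        algebraMap OL OM (aG t) * πM ^ (t + m) * ((t + m).choose (p ^ k) : OM))
        = (∑ t ∈ Finset.range (iM k + p ^ k * c + 1),
            algebraMap OL OM (aG t) * πM ^ (t + m) * ((t + m).choose (p ^ k) : OM))
          - ∑ t ∈ Finset.Ico (iM k + 1) (iM k + p ^ k * c + 1),
            algebraMap OL OM (aG t) * πM ^ (t + m) * ((t + m).choose (p ^ k) : OM) := by
      rw [hsplit]
      ring
    rw [hrw]
    exact dvd_sub hcancel hchunk2
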